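/- Let (R,D) be a differential division ring and f_1, f_2 ∈ R with f_1 ≠ f_2 (so f_2 - f_1 invertible). Define f_{1,2} = (f_2-f_1)f_2(f_2-f_1)^{-1} + (f_2'-f_1')(f_2-f_1)^{-1} and f_{2,1} = (f_1-f_2)f_1(f_1-f_2)^{-1} + (f_1'-f_2')(f_1-f_2)^{-1}, where a' = D(a). Then f_{1,2} + f_1 = f_{2,1} + f_2 and f_{1,2}·f_1 - f_1' = f_{2,1}·f_2 - f_2'. -/
import Mathlib

theorem stmt17 (R : Type) [DivisionRing R] (D : R → R)
    (hadd : ∀ a b : R, D (a + b) = D a + D b)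
    (hmul : ∀ a b : R, D (a * b) = D a * b + a * D b)
    (f₁ f₂ : R) (h : f₁ ≠ f₂)
    (f₁₂ f₂₁ : R)
    (h12 : f₁₂ = (f₂ - f₁) * f₂ * (f₂ - f₁)⁻¹ + (D f₂ - D f₁) * (f₂ - f₁)⁻¹)
    (h21 : f₂₁ = (f₁ - f₂) * f₁ * (f₁ - f₂)⁻¹ + (D f₁ - D f₂) * (f₁ - f₂)⁻¹) :
    f₁₂ + f₁ = f₂₁ + f₂ ∧ f₁₂ * f₁ - D f₁ = f₂₁ * f₂ - D f₂ := by
  have hu : f₂ - f₁ ≠ 0 := sub_ne_zero.mpr (Ne.symm h)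
  obtain ⟨v, hv⟩ : ∃ v, f₂ = f₁ + v := ⟨f₂ - f₁, by abel⟩
  subst hv
  have hv0 : v ≠ 0 := by simpa using hu
  have h1 : v * v⁻¹ = 1 := mul_inv_cancel₀ hv0
  have h2 : v⁻¹ * v = 1 := inv_mul_cancel₀ hv0
  have e1 : f₁ + v - f₁ = v := by abel
  have e2 : f₁ - (f₁ + v) = -v := by abel
  rw [h12, h21, e1, e2, inv_neg, hadd] at *
  constructor
  · simp only [mul_add, add_mul, sub_mul, neg_mul, mul_neg, neg_neg, mul_assoc, h1, h2,
      mul_one, one_mul, add_sub_cancel_left]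
    abel
  · simp only [mul_add, add_mul, sub_mul, neg_mul, mul_neg, neg_neg, mul_assoc, h1, h2,
      mul_one, one_mul, add_sub_cancel_left]
    abel
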